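/- For every natural number I ≥ 1, define α*_1(I) = 1/I − (1/I)·((I+1)/(44I+22))·(9I² + 7I + 20 − √(81I⁴ + 126I³ + 409I² − 512I + 4)) and α*_2(I) = (1/(44I+22))·(9I² + 7I + 20 − √(81I⁴ + 126I³ + 409I² − 512I + 4)). Then 81I⁴ + 126I³ + 409I² − 512I + 4 > 0, and (α*_1(I), α*_2(I)) satisfies the symmetric-equilibrium first-order system for the two-round game with w_1 = 1, w_2 = 11/9: setting β_1 = α*_1(I), β_2 = α*_2(I), both ∂G̃/∂α_1 = 0 and ∂G̃/∂α_2 = 0 hold at (α_1,α_2) = (α*_1(I), α*_2(I)), where G̃(α_1,α_2) = α_1(1−α_1−(I−1)β_1)w_1 + α_2(1−(α_1+α_2+(I−1)(β_1+β_2)))w_2(1−α_1). -/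

import Mathlib

/-- Two-round game payoff for one of `I` symmetric players, when each of the
other `I − 1` players supplies shares `β₁, β₂` in the two rounds:
`G̃(α₁,α₂) = y₀[α₁(1−α₁−(I−1)β₁)w₁ + α₂(1−(α₁+α₂+(I−1)(β₁+β₂)))w₂(1−α₁)]`. -/
noncomputable def gamePayoff (y₀ w₁ w₂ : ℝ) (I : ℕ) (β₁ β₂ a₁ a₂ : ℝ) : ℝ :=
  y₀ * (a₁ * (1 - a₁ - ((I : ℝ) - 1) * β₁) * w₁ +
    a₂ * (1 - (a₁ + a₂ + ((I : ℝ) - 1) * (β₁ + β₂))) * w₂ * (1 - a₁))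

/-- The discriminant `81I⁴ + 126I³ + 409I² − 512I + 4`. -/
noncomputable def gameDisc (I : ℝ) : ℝ :=
  81 * I ^ 4 + 126 * I ^ 3 + 409 * I ^ 2 - 512 * I + 4

/-- The symmetric equilibrium first-round share with `I` players
(for `w₁ = 1`, `w₂ = 11/9`). -/
noncomputable def alpha1Eq (I : ℝ) : ℝ :=
  1 / I - 1 / I * ((I + 1) / (44 * I + 22)) *
    (9 * I ^ 2 + 7 * I + 20 - Real.sqrt (gameDisc I))

/-- The symmetric equilibrium second-round share with `I` players
(for `w₁ = 1`, `w₂ = 11/9`). -/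
noncomputable def alpha2Eq (I : ℝ) : ℝ :=
  1 / (44 * I + 22) * (9 * I ^ 2 + 7 * I + 20 - Real.sqrt (gameDisc I))

lemma quadDeriv (a b k p : ℝ) : HasDerivAt (fun x : ℝ => a + b * x + k * x ^ 2) (b + 2 * k * p) p := by
  have h1 : HasDerivAt (fun x : ℝ => x) 1 p := hasDerivAt_id p
  have h2 : HasDerivAt (fun x : ℝ => x ^ 2) (2 * p) p := by simpa using hasDerivAt_pow 2 p
  have := ((hasDerivAt_const p a).add (h1.const_mul b)).add (h2.const_mul k)
  refine this.congr_deriv ?_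
  ring

/-- explicit symmetric equilibrium of Section 4.1.
For every `I ≥ 1` the discriminant is positive and `(α₁*(I), α₂*(I))` solves
the symmetric-equilibrium first-order system of the two-round game with
`w₁ = 1`, `w₂ = 11/9`, the rivals' shares being fixed at `β₁ = α₁*(I)`,
`β₂ = α₂*(I)`. -/
theorem game_symmetric_equilibrium (I : ℕ) (hI : 1 ≤ I) :
    0 < gameDisc (I : ℝ) ∧
      HasDerivAt
        (fun x : ℝ =>
          gamePayoff 1 1 (11 / 9) I (alpha1Eq (I : ℝ)) (alpha2Eq (I : ℝ)) x
            (alpha2Eq (I : ℝ)))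
        0 (alpha1Eq (I : ℝ)) ∧
      HasDerivAt
        (fun x : ℝ =>
          gamePayoff 1 1 (11 / 9) I (alpha1Eq (I : ℝ)) (alpha2Eq (I : ℝ))
            (alpha1Eq (I : ℝ)) x)
        0 (alpha2Eq (I : ℝ)) := by
  set c : ℝ := (I : ℝ) with hc_def
  have hc : (1:ℝ) ≤ c := by rw [hc_def]; exact_mod_cast hI
  have hc0 : c ≠ 0 := by linarith
  have hm : 44 * c + 22 ≠ 0 := by nlinarith
  have hD : 0 < gameDisc c := by
    unfold gameDisc
    nlinarith [sq_nonneg (c - 1), sq_nonneg c, sq_nonneg (c^2 - 1), sq_nonneg (c^2 - c)]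
  set s : ℝ := Real.sqrt (gameDisc c) with hs_def
  have hs : s ^ 2 = 81 * c ^ 4 + 126 * c ^ 3 + 409 * c ^ 2 - 512 * c + 4 := by
    rw [hs_def, Real.sq_sqrt hD.le]; rfl
  set a1 : ℝ := alpha1Eq c with ha1_def
  set a2 : ℝ := alpha2Eq c with ha2_def
  have h2 : (44 * c + 22) * a2 = 9 * c ^ 2 + 7 * c + 20 - s := by
    rw [ha2_def, alpha2Eq]; field_simp; rfl
  have h1 : c * a1 = 1 - (c + 1) * a2 := by
    rw [ha1_def, ha2_def, alpha1Eq, alpha2Eq]; field_simp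
  refine ⟨hD, ?_, ?_⟩
  · -- FOC in first coordinate
    have hfun : (fun x : ℝ =>
        gamePayoff 1 1 (11 / 9) I a1 a2 x a2) =
        (fun x : ℝ => (11/9) * a2 * (1 - (a2 + (c - 1) * (a1 + a2)))
          + (1 - (c - 1) * a1 - (11/9) * a2 * ((1 - (a2 + (c - 1) * (a1 + a2))) + 1)) * x
          + ((11/9) * a2 - 1) * x ^ 2) := by
      funext x; simp only [gamePayoff, ← hc_def]; ring
    have hE1 : (1 - (c - 1) * a1 - (11/9) * a2 * ((1 - (a2 + (c - 1) * (a1 + a2))) + 1))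
        + 2 * ((11/9) * a2 - 1) * a1 = 0 := by
      have hne : (9 * c * (44 * c + 22)) ≠ 0 := by positivity
      apply mul_left_cancel₀ hne
      rw [mul_zero]
      linear_combination ((44*c+22) * (c+1) * (11*a2 - 9)) * h1
        + (-(44*c+22) * a2 / 2 + (9*c^2 + 7*c + 20 + s) / 2) * h2 + (-1/2) * hs
    rw [hfun]
    have := quadDeriv ((11/9) * a2 * (1 - (a2 + (c - 1) * (a1 + a2))))
      (1 - (c - 1) * a1 - (11/9) * a2 * ((1 - (a2 + (c - 1) * (a1 + a2))) + 1))
      ((11/9) * a2 - 1) a1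
    rwa [hE1] at this
  · -- FOC in second coordinate
    have hfun : (fun x : ℝ =>
        gamePayoff 1 1 (11 / 9) I a1 a2 a1 x) =
        (fun x : ℝ => a1 * (1 - a1 - (c - 1) * a1)
          + ((1 - (a1 + (c - 1) * (a1 + a2))) * (11/9) * (1 - a1)) * x
          + (-(11/9) * (1 - a1)) * x ^ 2) := by
      funext x; simp only [gamePayoff, ← hc_def]; ring
    have hE2 : ((1 - (a1 + (c - 1) * (a1 + a2))) * (11/9) * (1 - a1))
        + 2 * (-(11/9) * (1 - a1)) * a2 = 0 := by
      linear_combination (-(11/9) * (1 - a1)) * h1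
    rw [hfun]
    have := quadDeriv (a1 * (1 - a1 - (c - 1) * a1))
      ((1 - (a1 + (c - 1) * (a1 + a2))) * (11/9) * (1 - a1))
      (-(11/9) * (1 - a1)) a2
    rwa [hE2] at this
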